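/- Let H be a real Hilbert space with inner product E, let e₁, …, eₙ ∈ H, γ > 0, λ > 0, and y₁, …, yₙ ∈ ℝ. Then the minimizer over g ∈ H of (1/n) ∑_{i=1}^n (yᵢ - E(g, γ eᵢ))² + λ E(g, g) exists, is unique, and lies in the span of {e₁, …, eₙ}; explicitly it equals ∑_{i=1}^n cᵢ γ eᵢ where c = (G + nλ I)⁻¹ y with Gram matrix G_{ij} = γ² E(eᵢ, eⱼ). -/

import Mathlib

open scoped RealInnerProductSpace
open Matrix

/-- Representer theorem for renormalized ridge regression: the minimizer of
`(1/n) ∑ (yᵢ - E(g, γ eᵢ))² + λ E(g,g)` exists, is unique, lies in the span of the `eᵢ`,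
and equals `∑ cᵢ γ eᵢ` with `c = (G + nλI)⁻¹ y`, `G_{ij} = γ² E(eᵢ, eⱼ)`. -/
theorem stmt4 {H : Type*} [NormedAddCommGroup H] [InnerProductSpace ℝ H] [CompleteSpace H]
    (n : ℕ) (hn : 0 < n) (e : Fin n → H) (γ lam : ℝ) (hγ : 0 < γ) (hlam : 0 < lam)
    (y : Fin n → ℝ)
    (G : Matrix (Fin n) (Fin n) ℝ) (hG : ∀ i j, G i j = γ ^ 2 * ⟪e i, e j⟫)
    (c : Fin n → ℝ) (hc : c = (G + ((n : ℝ) * lam) • (1 : Matrix (Fin n) (Fin n) ℝ))⁻¹.mulVec y)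
    (F : H → ℝ)
    (hF : ∀ g, F g = (1/(n : ℝ)) * ∑ i, (y i - ⟪g, γ • e i⟫) ^ 2 + lam * ⟪g, g⟫)
    (fhat : H) (hfhat : fhat = ∑ i, c i • (γ • e i)) :
    (∀ g, F fhat ≤ F g) ∧ (∀ g, F g ≤ F fhat → g = fhat) ∧
      fhat ∈ Submodule.span ℝ (Set.range e) := by
  have hn' : (n : ℝ) ≠ 0 := Nat.cast_ne_zero.mpr hn.ne'
  set A : Matrix (Fin n) (Fin n) ℝ :=
    G + ((n : ℝ) * lam) • (1 : Matrix (Fin n) (Fin n) ℝ) with hAdef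
  -- A is positive definite, hence invertible
  have hGinner : ∀ i j, G i j = ⟪γ • e i, γ • e j⟫ := by
    intro i j
    rw [hG, real_inner_smul_left, real_inner_smul_right]
    ring
  have hApd : A.PosDef := by
    refine Matrix.posDef_iff_dotProduct_mulVec.mpr ⟨?_, ?_⟩
    · have hGh : G.IsHermitian := by
        ext i j
        simp only [Matrix.conjTranspose_apply, star_trivial]
        rw [hGinner, hGinner, real_inner_comm]
      have h1h : (((n : ℝ) * lam) • (1 : Matrix (Fin n) (Fin n) ℝ)).IsHermitian := by
        ext i j
        simp only [Matrix.conjTranspose_apply, star_trivial, Matrix.smul_apply,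
          Matrix.one_apply, smul_eq_mul]
        by_cases h : i = j
        · simp [h]
        · simp [h, Ne.symm h]
      exact hGh.add h1h
    · intro x hx
      have hGq : dotProduct (star x) (G *ᵥ x)
          = ⟪∑ i, x i • (γ • e i), ∑ j, x j • (γ • e j)⟫ := by
        rw [sum_inner]
        simp only [dotProduct, Matrix.mulVec, dotProduct, star_trivial]
        refine Finset.sum_congr rfl fun i _ => ?_
        rw [inner_sum, Finset.mul_sum]
        refine Finset.sum_congr rfl fun j _ => ?_
        rw [real_inner_smul_left, real_inner_smul_right, hGinner]
        ring
      have h1 : 0 ≤ dotProduct (star x) (G *ᵥ x) := by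
        rw [hGq]; exact real_inner_self_nonneg
      have h2 : 0 < dotProduct (star x) ((((n : ℝ) * lam) • (1 : Matrix (Fin n) (Fin n) ℝ)) *ᵥ x) := by
        have : dotProduct (star x) ((((n : ℝ) * lam) • (1 : Matrix (Fin n) (Fin n) ℝ)) *ᵥ x)
            = ((n : ℝ) * lam) * ∑ i, x i ^ 2 := by
          simp [Matrix.smul_mulVec, Matrix.one_mulVec, dotProduct, Finset.mul_sum]
          ring_nf
          exact Finset.sum_congr rfl fun i _ => by ring
        rw [this]
        have hxx : 0 < ∑ i, x i ^ 2 := by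
          obtain ⟨i, hi⟩ := Function.ne_iff.mp hx
          exact Finset.sum_pos' (fun j _ => sq_nonneg _)
            ⟨i, Finset.mem_univ i, pow_two_pos_of_ne_zero hi⟩
        have hn0 : (0 : ℝ) < n := Nat.cast_pos.mpr hn
        exact mul_pos (mul_pos hn0 hlam) hxx
      have hsplit : A *ᵥ x = G *ᵥ x + (((n : ℝ) * lam) • (1 : Matrix (Fin n) (Fin n) ℝ)) *ᵥ x := by
        rw [hAdef, Matrix.add_mulVec]
      rw [hsplit, dotProduct_add]
      linarith
  have hAunit : IsUnit A.det := hApd.det_pos.ne'.isUnit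
  have hAc : A *ᵥ c = y := by
    rw [hc, Matrix.mulVec_mulVec, Matrix.mul_nonsing_inv A hAunit, Matrix.one_mulVec]
  -- residual identity: y j - ⟪fhat, γ e j⟫ = n λ c j
  have hGsymm : ∀ i j, G i j = G j i := fun i j => by
    rw [hGinner, hGinner, real_inner_comm]
  have hr : ∀ j, y j - ⟪fhat, γ • e j⟫ = (n : ℝ) * lam * c j := by
    intro j
    have hfj : ⟪fhat, γ • e j⟫ = ∑ i, c i * G i j := by
      rw [hfhat, sum_inner]
      exact Finset.sum_congr rfl fun i _ => by rw [real_inner_smul_left, hGinner]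
    have hAcj : (G *ᵥ c) j + ((n : ℝ) * lam) * c j = y j := by
      have h := congrFun hAc j
      rw [hAdef, Matrix.add_mulVec, Matrix.smul_mulVec, Matrix.one_mulVec] at h
      simpa using h
    have hmv : (G *ᵥ c) j = ∑ i, c i * G i j := by
      simp only [Matrix.mulVec, dotProduct]
      exact Finset.sum_congr rfl fun i _ => by rw [hGsymm j i]; ring
    rw [hfj, ← hmv]
    linarith
  -- key expansion
  have hFg : ∀ g, F g = F fhat + (1/(n : ℝ)) * ∑ i, ⟪g - fhat, γ • e i⟫ ^ 2
      + lam * ⟪g - fhat, g - fhat⟫ := by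
    intro g
    have e1 : ∀ i, (y i - ⟪g, γ • e i⟫) ^ 2
        = ((n : ℝ) * lam * c i) ^ 2
          - 2 * ((n : ℝ) * lam) * (c i * ⟪g - fhat, γ • e i⟫)
          + ⟪g - fhat, γ • e i⟫ ^ 2 := by
      intro i
      have : y i - ⟪g, γ • e i⟫ = (n : ℝ) * lam * c i - ⟪g - fhat, γ • e i⟫ := by
        rw [inner_sub_left]
        have := hr i
        linarith
      rw [this]; ring
    have e2 : ∀ i, (y i - ⟪fhat, γ • e i⟫) ^ 2 = ((n : ℝ) * lam * c i) ^ 2 := by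
      intro i; rw [hr i]
    have e3 : ⟪g, g⟫ = ⟪fhat, fhat⟫ + 2 * ∑ i, c i * ⟪g - fhat, γ • e i⟫
        + ⟪g - fhat, g - fhat⟫ := by
      have hs : ⟪fhat, g - fhat⟫ = ∑ i, c i * ⟪g - fhat, γ • e i⟫ := by
        rw [hfhat, sum_inner]
        exact Finset.sum_congr rfl fun i _ => by
          rw [real_inner_smul_left, real_inner_comm]
      have hgd : g = fhat + (g - fhat) := by abel
      calc ⟪g, g⟫ = ⟪fhat + (g - fhat), fhat + (g - fhat)⟫ := by rw [← hgd]
        _ = ⟪fhat, fhat⟫ + ⟪fhat, g - fhat⟫ + (⟪g - fhat, fhat⟫ + ⟪g - fhat, g - fhat⟫) := by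
            rw [inner_add_left, inner_add_right, inner_add_right]
        _ = ⟪fhat, fhat⟫ + 2 * ⟪fhat, g - fhat⟫ + ⟪g - fhat, g - fhat⟫ := by
            rw [real_inner_comm (g - fhat) fhat]; ring
        _ = _ := by rw [hs]
    rw [hF g, hF fhat]
    simp only [e1, e2, e3]
    rw [Finset.sum_add_distrib, Finset.sum_sub_distrib, ← Finset.mul_sum]
    field_simp
    ring
  refine ⟨?_, ?_, ?_⟩
  · intro g
    rw [hFg g]
    have h1 : 0 ≤ (1/(n : ℝ)) * ∑ i, ⟪g - fhat, γ • e i⟫ ^ 2 := by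
      have : 0 ≤ ∑ i, ⟪g - fhat, γ • e i⟫ ^ 2 :=
        Finset.sum_nonneg fun i _ => sq_nonneg _
      positivity
    have h2 : 0 ≤ lam * ⟪g - fhat, g - fhat⟫ :=
      mul_nonneg hlam.le real_inner_self_nonneg
    linarith
  · intro g hle
    rw [hFg g] at hle
    have h1 : 0 ≤ (1/(n : ℝ)) * ∑ i, ⟪g - fhat, γ • e i⟫ ^ 2 := by
      have : 0 ≤ ∑ i, ⟪g - fhat, γ • e i⟫ ^ 2 :=
        Finset.sum_nonneg fun i _ => sq_nonneg _
      positivity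
    have h2 : 0 ≤ ⟪g - fhat, g - fhat⟫ := real_inner_self_nonneg
    have h3 : ⟪g - fhat, g - fhat⟫ = (0 : ℝ) := by nlinarith
    have : g - fhat = 0 := inner_self_eq_zero.mp h3
    exact sub_eq_zero.mp this
  · rw [hfhat]
    exact Submodule.sum_mem _ fun i _ =>
      Submodule.smul_mem _ _ (Submodule.smul_mem _ _ (Submodule.subset_span ⟨i, rfl⟩))
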